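/- Let (Z₁,...,Z_{2k}) be a random self-avoiding path on K = {−k,...,k}∖{0} with distribution P(Z₁ = y) = υ_y / Σ_{z∈K} υ_z and P(Z_i = y | Z₁,...,Z_{i−1}) = υ_y / Σ_{z ∈ K∖{Z₁,...,Z_{i−1}}} υ_z for 2 ≤ i ≤ 2k. Let Θ be a nonempty subset of {z ∈ K : υ_z ≠ 0}, τ = inf{i : Z_i ∈ Θ}, and Y = Z_τ. Then P(Y = y) = 1_Θ(y) · υ_y / Σ_{y′∈Θ} υ_{y′}. -/

import Mathlib

open Finset

section

variable {ι : Type*} [Fintype ι] [DecidableEq ι]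

/-- The first time the random self-avoiding path `σ` (an enumeration of `ι`,
sampled without replacement proportionally to the weights) visits `Θ`. -/
noncomputable def tauIdx (Θ : Finset ι) (σ : Fin (Fintype.card ι) ≃ ι) : ℕ :=
  sInf {i : ℕ | ∃ h : i < Fintype.card ι, σ ⟨i, h⟩ ∈ Θ}

/-- The probability of the initial segment (up to and including time `τ`) of the
enumeration `σ` under weighted sampling without replacement: at each step the
next element is chosen among the unvisited ones with probability proportional
to its weight `υ`. -/
noncomputable def pathProbUpTo (υ : ι → ℝ) (Θ : Finset ι)
    (σ : Fin (Fintype.card ι) ≃ ι) : ℝ :=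
  ∏ i : Fin (Fintype.card ι),
    if (i : ℕ) ≤ tauIdx Θ σ then
      υ (σ i) / (∑ j ∈ Finset.univ.filter (fun j => i ≤ j), υ (σ j))
    else 1

/-- `P(Y = y)`, where `Y = Z_τ` is the first element of `Θ` visited by the
weighted self-avoiding path: the sum over all enumerations `σ` of the
probability of the initial segment of `σ` up to `τ`, corrected by the number
`(n - 1 - τ)!` of completions of that initial segment. -/
noncomputable def firstHitProb (υ : ι → ℝ) (Θ : Finset ι) (y : ι) : ℝ :=
  ∑ σ : Fin (Fintype.card ι) ≃ ι,
    if h : tauIdx Θ σ < Fintype.card ι then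
      (if σ ⟨tauIdx Θ σ, h⟩ = y then
        pathProbUpTo υ Θ σ /
          ((Fintype.card ι - 1 - tauIdx Θ σ).factorial : ℝ)
      else 0)
    else 0

end

set_option linter.unusedSectionVars false
set_option maxHeartbeats 1000000

namespace FHP

section

variable {ι : Type*} [Fintype ι] [DecidableEq ι]

lemma tauIdx_spec (Θ : Finset ι) (hne : Θ.Nonempty) (σ : Fin (Fintype.card ι) ≃ ι) :
    ∃ h : tauIdx Θ σ < Fintype.card ι, σ ⟨tauIdx Θ σ, h⟩ ∈ Θ := by
  have hne' : {i : ℕ | ∃ h : i < Fintype.card ι, σ ⟨i, h⟩ ∈ Θ}.Nonempty := by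
    obtain ⟨w, hw⟩ := hne
    refine ⟨(σ.symm w : ℕ), (σ.symm w).isLt, ?_⟩
    show σ (σ.symm w) ∈ Θ
    simpa using hw
  exact Nat.sInf_mem hne'

lemma tauIdx_lt (Θ : Finset ι) (hne : Θ.Nonempty) (σ : Fin (Fintype.card ι) ≃ ι) :
    tauIdx Θ σ < Fintype.card ι := by
  obtain ⟨h, -⟩ := tauIdx_spec Θ hne σ
  exact h

lemma tauIdx_min (Θ : Finset ι) (σ : Fin (Fintype.card ι) ≃ ι) {j : ℕ}
    (hj : j < tauIdx Θ σ) (h : j < Fintype.card ι) : σ ⟨j, h⟩ ∉ Θ :=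
  fun hm => Nat.notMem_of_lt_sInf hj ⟨h, hm⟩

lemma tauIdx_eq (Θ : Finset ι) (σ : Fin (Fintype.card ι) ≃ ι) (t : ℕ)
    (ht : t < Fintype.card ι) (hmem : σ ⟨t, ht⟩ ∈ Θ)
    (hmin : ∀ j (hj : j < Fintype.card ι), j < t → σ ⟨j, hj⟩ ∉ Θ) :
    tauIdx Θ σ = t := by
  refine le_antisymm (Nat.sInf_le ⟨ht, hmem⟩) (le_csInf ⟨t, ht, hmem⟩ ?_)
  rintro b ⟨hb, hbmem⟩
  by_contra hlt
  push_neg at hlt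
  exact hmin b hb hlt hbmem

def E0 {m c : ℕ} (hc : c + 1 = m) : Fin m ≃ Option (Fin c) :=
  (finCongr hc).symm.trans (finSuccEquiv c)

lemma E0_symm_none {m c : ℕ} (hc : c + 1 = m) (h0 : 0 < m) :
    (E0 hc).symm none = ⟨0, h0⟩ := by
  apply Fin.ext; simp [E0]

lemma E0_symm_some {m c : ℕ} (hc : c + 1 = m) (j : Fin c) (h : (j : ℕ) + 1 < m) :
    (E0 hc).symm (some j) = ⟨(j : ℕ) + 1, h⟩ := by
  apply Fin.ext; simp [E0]

lemma E0_zero {m c : ℕ} (hc : c + 1 = m) (h0 : 0 < m) :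
    E0 hc ⟨0, h0⟩ = none := by
  rw [← E0_symm_none hc h0, Equiv.apply_symm_apply]

lemma E0_succ {m c : ℕ} (hc : c + 1 = m) (j : Fin c) (h : (j : ℕ) + 1 < m) :
    E0 hc ⟨(j : ℕ) + 1, h⟩ = some j := by
  rw [← E0_symm_some hc j h, Equiv.apply_symm_apply]

lemma card_ne_add_one (z : ι) :
    Fintype.card {x : ι // x ≠ z} + 1 = Fintype.card ι := by
  have := Fintype.card_congr (Equiv.optionSubtypeNe z)
  simpa [Fintype.card_option] using this

noncomputable def fiberEquiv (z : ι)
    (hc : Fintype.card {x : ι // x ≠ z} + 1 = Fintype.card ι) (h0 : 0 < Fintype.card ι) :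
    (Fin (Fintype.card {x : ι // x ≠ z}) ≃ {x : ι // x ≠ z}) ≃
      {σ : Fin (Fintype.card ι) ≃ ι // σ ⟨0, h0⟩ = z} :=
  (Equiv.optionSubtype z).symm.trans
    (((E0 hc).symm.equivCongr (Equiv.refl ι)).subtypeEquiv (fun e => by
      rw [Equiv.equivCongr_apply_apply, Equiv.symm_symm, E0_zero hc h0]
      rfl))

lemma fiberEquiv_apply_zero (z : ι)
    (hc : Fintype.card {x : ι // x ≠ z} + 1 = Fintype.card ι) (h0 : 0 < Fintype.card ι)
    (τ' : Fin (Fintype.card {x : ι // x ≠ z}) ≃ {x : ι // x ≠ z}) :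
    (fiberEquiv z hc h0 τ' : Fin (Fintype.card ι) ≃ ι) ⟨0, h0⟩ = z :=
  (fiberEquiv z hc h0 τ').2

lemma fiberEquiv_apply_succ (z : ι)
    (hc : Fintype.card {x : ι // x ≠ z} + 1 = Fintype.card ι) (h0 : 0 < Fintype.card ι)
    (τ' : Fin (Fintype.card {x : ι // x ≠ z}) ≃ {x : ι // x ≠ z})
    (j : Fin (Fintype.card {x : ι // x ≠ z})) (h : (j : ℕ) + 1 < Fintype.card ι) :
    (fiberEquiv z hc h0 τ' : Fin (Fintype.card ι) ≃ ι) ⟨(j : ℕ) + 1, h⟩ = ↑(τ' j) := by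
  show (((E0 hc).symm.equivCongr (Equiv.refl ι))
      ((Equiv.optionSubtype z).symm τ' : Option _ ≃ ι)) ⟨(j : ℕ) + 1, h⟩ = ↑(τ' j)
  rw [Equiv.equivCongr_apply_apply, Equiv.symm_symm, E0_succ hc j h]
  simp

lemma prod_fin_eq {m c : ℕ} (hc : c + 1 = m) (h0 : 0 < m) (f : Fin m → ℝ) :
    ∏ i : Fin m, f i
      = f ⟨0, h0⟩ * ∏ j : Fin c, f ⟨(j : ℕ) + 1, by have := j.isLt; omega⟩ := by
  rw [← Equiv.prod_comp (E0 hc).symm f, Fintype.prod_option, E0_symm_none hc h0]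
  have h1 : ∀ j : Fin c, (E0 hc).symm (some j)
      = (⟨(j : ℕ) + 1, by have := j.isLt; omega⟩ : Fin m) :=
    fun j => E0_symm_some hc j (by have := j.isLt; omega)
  simp only [h1]

lemma sum_fin_eq {m c : ℕ} (hc : c + 1 = m) (h0 : 0 < m) (f : Fin m → ℝ) :
    ∑ i : Fin m, f i
      = f ⟨0, h0⟩ + ∑ j : Fin c, f ⟨(j : ℕ) + 1, by have := j.isLt; omega⟩ := by
  rw [← Equiv.sum_comp (E0 hc).symm f, Fintype.sum_option, E0_symm_none hc h0]
  have h1 : ∀ j : Fin c, (E0 hc).symm (some j)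
      = (⟨(j : ℕ) + 1, by have := j.isLt; omega⟩ : Fin m) :=
    fun j => E0_symm_some hc j (by have := j.isLt; omega)
  simp only [h1]

lemma denom_zero (υ : ι → ℝ) (σ : Fin (Fintype.card ι) ≃ ι) (h0 : 0 < Fintype.card ι) :
    (∑ j ∈ Finset.univ.filter (fun j => (⟨0, h0⟩ : Fin (Fintype.card ι)) ≤ j), υ (σ j))
      = ∑ x : ι, υ x := by
  rw [Finset.filter_true_of_mem fun j _ => by simp [Fin.le_def]]
  exact Equiv.sum_comp σ υ


lemma pathProb_of_tau_zero (υ : ι → ℝ) (Θ : Finset ι) (σ : Fin (Fintype.card ι) ≃ ι)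
    (h0 : 0 < Fintype.card ι) (htau : tauIdx Θ σ = 0) :
    pathProbUpTo υ Θ σ = υ (σ ⟨0, h0⟩) / ∑ x : ι, υ x := by
  have hc : (Fintype.card ι - 1) + 1 = Fintype.card ι := by omega
  unfold pathProbUpTo
  rw [prod_fin_eq hc h0, if_pos (Nat.zero_le _), denom_zero υ σ h0,
    Finset.prod_eq_one (fun j _ => if_neg (by rw [htau]; exact Nat.not_succ_le_zero _)), mul_one]

lemma denom_succ (υ : ι → ℝ) (z : ι)
    (hc : Fintype.card {x : ι // x ≠ z} + 1 = Fintype.card ι) (h0 : 0 < Fintype.card ι)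
    (τ' : Fin (Fintype.card {x : ι // x ≠ z}) ≃ {x : ι // x ≠ z})
    (j : Fin (Fintype.card {x : ι // x ≠ z})) (hj1 : (j : ℕ) + 1 < Fintype.card ι) :
    (∑ jj ∈ Finset.univ.filter
        (fun jj => (⟨(j : ℕ) + 1, hj1⟩ : Fin (Fintype.card ι)) ≤ jj),
      υ ((fiberEquiv z hc h0 τ' : Fin (Fintype.card ι) ≃ ι) jj))
    = ∑ jj ∈ Finset.univ.filter (fun jj => j ≤ jj), υ ↑(τ' jj) := by
  rw [Finset.sum_filter, Finset.sum_filter, sum_fin_eq hc h0,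
    if_neg (fun h => Nat.not_succ_le_zero _ (Fin.mk_le_mk.mp h))]
  rw [zero_add]
  refine Finset.sum_congr rfl fun j' _ => ?_
  have h2 : (j' : ℕ) + 1 < Fintype.card ι := by have := j'.isLt; omega
  have h3 : (fiberEquiv z hc h0 τ' : Fin (Fintype.card ι) ≃ ι)
      ⟨(j' : ℕ) + 1, by have := j'.isLt; omega⟩ = ↑(τ' j') :=
    fiberEquiv_apply_succ z hc h0 τ' j' h2
  rw [h3]
  refine if_congr ?_ rfl rfl
  rw [Fin.mk_le_mk, Fin.le_def]
  omega

lemma tau_fiber_mem (Θ : Finset ι) (z : ι) (hz : z ∈ Θ)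
    (hc : Fintype.card {x : ι // x ≠ z} + 1 = Fintype.card ι) (h0 : 0 < Fintype.card ι)
    (τ' : Fin (Fintype.card {x : ι // x ≠ z}) ≃ {x : ι // x ≠ z}) :
    tauIdx Θ (fiberEquiv z hc h0 τ' : Fin (Fintype.card ι) ≃ ι) = 0 :=
  tauIdx_eq Θ _ 0 h0 (by rw [fiberEquiv_apply_zero]; exact hz)
    (fun j hj hj0 => absurd hj0 (Nat.not_lt_zero j))

lemma tau_fiber_not_mem (Θ : Finset ι) (z : ι) (hz : z ∉ Θ)
    (hc : Fintype.card {x : ι // x ≠ z} + 1 = Fintype.card ι) (h0 : 0 < Fintype.card ι)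
    (τ' : Fin (Fintype.card {x : ι // x ≠ z}) ≃ {x : ι // x ≠ z})
    (hne' : (Θ.subtype (· ≠ z)).Nonempty) :
    tauIdx Θ (fiberEquiv z hc h0 τ' : Fin (Fintype.card ι) ≃ ι)
      = tauIdx (Θ.subtype (· ≠ z)) τ' + 1 := by
  have ht' : tauIdx (Θ.subtype (· ≠ z)) τ' < Fintype.card {x : ι // x ≠ z} :=
    tauIdx_lt _ hne' τ'
  have ht : tauIdx (Θ.subtype (· ≠ z)) τ' + 1 < Fintype.card ι := by omega
  refine tauIdx_eq Θ _ _ ht ?_ ?_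
  · have h3 : (fiberEquiv z hc h0 τ' : Fin (Fintype.card ι) ≃ ι)
        ⟨tauIdx (Θ.subtype (· ≠ z)) τ' + 1, ht⟩
        = ↑(τ' ⟨tauIdx (Θ.subtype (· ≠ z)) τ', ht'⟩) :=
      fiberEquiv_apply_succ z hc h0 τ' ⟨tauIdx (Θ.subtype (· ≠ z)) τ', ht'⟩ ht
    rw [h3]
    have := tauIdx_spec (Θ.subtype (· ≠ z)) hne' τ'
    obtain ⟨h', hm⟩ := this
    exact Finset.mem_subtype.mp hm
  · intro j hj hjlt
    cases j with
    | zero =>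
      have h00 : (fiberEquiv z hc h0 τ' : Fin (Fintype.card ι) ≃ ι) ⟨0, hj⟩ = z :=
        fiberEquiv_apply_zero z hc h0 τ'
      rw [h00]; exact hz
    | succ i =>
      have hic : i < Fintype.card {x : ι // x ≠ z} := by omega
      have h3 : (fiberEquiv z hc h0 τ' : Fin (Fintype.card ι) ≃ ι) ⟨i + 1, hj⟩
          = ↑(τ' ⟨i, hic⟩) := fiberEquiv_apply_succ z hc h0 τ' ⟨i, hic⟩ hj
      rw [h3]
      intro hmem
      exact tauIdx_min (Θ.subtype (· ≠ z)) τ' (show i < _ by omega) hic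
        (Finset.mem_subtype.mpr hmem)

lemma pathProb_succ (υ : ι → ℝ) (Θ : Finset ι) (z : ι)
    (hc : Fintype.card {x : ι // x ≠ z} + 1 = Fintype.card ι) (h0 : 0 < Fintype.card ι)
    (τ' : Fin (Fintype.card {x : ι // x ≠ z}) ≃ {x : ι // x ≠ z})
    (htau : tauIdx Θ (fiberEquiv z hc h0 τ' : Fin (Fintype.card ι) ≃ ι)
        = tauIdx (Θ.subtype (· ≠ z)) τ' + 1) :
    pathProbUpTo υ Θ (fiberEquiv z hc h0 τ' : Fin (Fintype.card ι) ≃ ι)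
      = (υ z / ∑ x : ι, υ x)
        * pathProbUpTo (fun x : {x : ι // x ≠ z} => υ ↑x) (Θ.subtype (· ≠ z)) τ' := by
  unfold pathProbUpTo
  rw [prod_fin_eq hc h0, if_pos (Nat.zero_le _),
    denom_zero υ (fiberEquiv z hc h0 τ' : Fin (Fintype.card ι) ≃ ι) h0,
    fiberEquiv_apply_zero z hc h0 τ']
  congr 1
  refine Finset.prod_congr rfl fun j _ => ?_
  have hj1 : (j : ℕ) + 1 < Fintype.card ι := by have := j.isLt; omega
  have h3 : (fiberEquiv z hc h0 τ' : Fin (Fintype.card ι) ≃ ι)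
      ⟨(j : ℕ) + 1, by have := j.isLt; omega⟩ = ↑(τ' j) :=
    fiberEquiv_apply_succ z hc h0 τ' j hj1
  rw [htau]
  by_cases hjt : (j : ℕ) ≤ tauIdx (Θ.subtype (· ≠ z)) τ'
  · rw [if_pos (show ((⟨(j : ℕ) + 1, by have := j.isLt; omega⟩ : Fin (Fintype.card ι)) : ℕ)
        ≤ tauIdx (Θ.subtype (· ≠ z)) τ' + 1 from Nat.succ_le_succ hjt),
      if_pos hjt, h3]
    congr 1
    exact denom_succ υ z hc h0 τ' j hj1
  · rw [if_neg (show ¬ ((⟨(j : ℕ) + 1, by have := j.isLt; omega⟩ : Fin (Fintype.card ι)) : ℕ)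
        ≤ tauIdx (Θ.subtype (· ≠ z)) τ' + 1 from fun h => hjt (Nat.le_of_succ_le_succ h)),
      if_neg hjt]

lemma term_eq_of_tau (υ : ι → ℝ) (Θ : Finset ι) (y : ι) (σ : Fin (Fintype.card ι) ≃ ι)
    (t : ℕ) (ht : t < Fintype.card ι) (htau : tauIdx Θ σ = t) :
    (if h : tauIdx Θ σ < Fintype.card ι then
      (if σ ⟨tauIdx Θ σ, h⟩ = y then
        pathProbUpTo υ Θ σ / ((Fintype.card ι - 1 - tauIdx Θ σ).factorial : ℝ)
      else 0)
    else 0)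
    = if σ ⟨t, ht⟩ = y then
        pathProbUpTo υ Θ σ / ((Fintype.card ι - 1 - t).factorial : ℝ)
      else 0 := by
  subst htau
  rw [dif_pos ht]

end

universe u

lemma main_aux : ∀ (n : ℕ) (ι : Type u) [Fintype ι] [DecidableEq ι],
    Fintype.card ι ≤ n → ∀ (υ : ι → ℝ), (∀ z, 0 ≤ υ z) → ∀ (Θ : Finset ι), Θ.Nonempty →
    (∀ z ∈ Θ, υ z ≠ 0) → ∀ y : ι,
    firstHitProb υ Θ y = if y ∈ Θ then υ y / ∑ z ∈ Θ, υ z else 0 := by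
  intro n
  induction n with
  | zero =>
    intro ι _ _ hn υ hυ Θ hne hΘ y
    obtain ⟨w, hw⟩ := hne
    have : 0 < Fintype.card ι := Fintype.card_pos_iff.mpr ⟨w⟩
    omega
  | succ n IH =>
    intro ι _ _ hn υ hυ Θ hne hΘ y
    have h0 : 0 < Fintype.card ι := Fintype.card_pos_iff.mpr ⟨y⟩
    have hTpos : 0 < ∑ z ∈ Θ, υ z := by
      obtain ⟨w, hw⟩ := hne
      exact Finset.sum_pos' (fun i _ => hυ i)
        ⟨w, hw, lt_of_le_of_ne (hυ w) (Ne.symm (hΘ w hw))⟩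
    have hST : (∑ z ∈ Θ, υ z) ≤ ∑ x : ι, υ x :=
      Finset.sum_le_sum_of_subset_of_nonneg (Finset.subset_univ Θ) (fun i _ _ => hυ i)
    have hSpos : 0 < ∑ x : ι, υ x := lt_of_lt_of_le hTpos hST
    have hsplit : firstHitProb υ Θ y
        = ∑ z : ι, ∑ σs : {σ : Fin (Fintype.card ι) ≃ ι // σ ⟨0, h0⟩ = z},
            (if h : tauIdx Θ (σs : Fin (Fintype.card ι) ≃ ι) < Fintype.card ι then
              (if (σs : Fin (Fintype.card ι) ≃ ι)
                  ⟨tauIdx Θ (σs : Fin (Fintype.card ι) ≃ ι), h⟩ = y then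
                pathProbUpTo υ Θ (σs : Fin (Fintype.card ι) ≃ ι) /
                  ((Fintype.card ι - 1
                      - tauIdx Θ (σs : Fin (Fintype.card ι) ≃ ι)).factorial : ℝ)
              else 0)
            else 0) :=
      (Fintype.sum_fiberwise _ _).symm
    have hinner : ∀ z : ι,
        (∑ σs : {σ : Fin (Fintype.card ι) ≃ ι // σ ⟨0, h0⟩ = z},
          (if h : tauIdx Θ (σs : Fin (Fintype.card ι) ≃ ι) < Fintype.card ι then
            (if (σs : Fin (Fintype.card ι) ≃ ι)
                ⟨tauIdx Θ (σs : Fin (Fintype.card ι) ≃ ι), h⟩ = y then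
              pathProbUpTo υ Θ (σs : Fin (Fintype.card ι) ≃ ι) /
                ((Fintype.card ι - 1
                    - tauIdx Θ (σs : Fin (Fintype.card ι) ≃ ι)).factorial : ℝ)
            else 0)
          else 0))
        = if z ∈ Θ then (if z = y then υ z / ∑ x : ι, υ x else 0)
          else (υ z / ∑ x : ι, υ x)
            * (if y ∈ Θ then υ y / ∑ w ∈ Θ, υ w else 0) := by
      intro z
      have hc : Fintype.card {x : ι // x ≠ z} + 1 = Fintype.card ι := card_ne_add_one z
      rw [← Equiv.sum_comp (fiberEquiv z hc h0)]
      by_cases hz : z ∈ Θ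
      · -- first step hits Θ immediately
        rw [if_pos hz]
        have hterm : ∀ τ' : Fin (Fintype.card {x : ι // x ≠ z}) ≃ {x : ι // x ≠ z},
            (if h : tauIdx Θ (fiberEquiv z hc h0 τ' : Fin (Fintype.card ι) ≃ ι)
                < Fintype.card ι then
              (if (fiberEquiv z hc h0 τ' : Fin (Fintype.card ι) ≃ ι)
                  ⟨tauIdx Θ (fiberEquiv z hc h0 τ' : Fin (Fintype.card ι) ≃ ι), h⟩ = y then
                pathProbUpTo υ Θ (fiberEquiv z hc h0 τ' : Fin (Fintype.card ι) ≃ ι) /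
                  ((Fintype.card ι - 1 - tauIdx Θ
                      (fiberEquiv z hc h0 τ' : Fin (Fintype.card ι) ≃ ι)).factorial : ℝ)
              else 0)
            else 0)
            = if z = y then (υ z / ∑ x : ι, υ x)
                / ((Fintype.card {x : ι // x ≠ z}).factorial : ℝ) else 0 := by
          intro τ'
          have htau : tauIdx Θ (fiberEquiv z hc h0 τ' : Fin (Fintype.card ι) ≃ ι) = 0 :=
            tau_fiber_mem Θ z hz hc h0 τ'
          rw [term_eq_of_tau υ Θ y _ 0 h0 htau, fiberEquiv_apply_zero z hc h0 τ',
            pathProb_of_tau_zero υ Θ _ h0 htau, fiberEquiv_apply_zero z hc h0 τ',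
            Nat.sub_zero, show Fintype.card ι - 1 = Fintype.card {x : ι // x ≠ z} by omega]
        rw [Finset.sum_congr rfl (fun τ' _ => hterm τ'), Finset.sum_const]
        have hcard : Fintype.card (Fin (Fintype.card {x : ι // x ≠ z})
            ≃ {x : ι // x ≠ z}) = (Fintype.card {x : ι // x ≠ z}).factorial := by
          rw [Fintype.card_equiv (Fintype.equivFin {x : ι // x ≠ z}).symm, Fintype.card_fin]
        rw [Finset.card_univ, hcard, nsmul_eq_mul]
        have hfac : ((Fintype.card {x : ι // x ≠ z}).factorial : ℝ) ≠ 0 :=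
          Nat.cast_ne_zero.mpr (Nat.factorial_ne_zero _)
        by_cases hzy : z = y
        · rw [if_pos hzy, if_pos hzy, mul_div_cancel₀ _ hfac]
        · rw [if_neg hzy, if_neg hzy, mul_zero]
      · -- first step avoids Θ
        rw [if_neg hz]
        have hne' : (Θ.subtype (· ≠ z)).Nonempty := by
          obtain ⟨w, hw⟩ := hne
          exact ⟨⟨w, fun hwz => hz (hwz ▸ hw)⟩, Finset.mem_subtype.mpr hw⟩
        have ht'lt : ∀ τ' : Fin (Fintype.card {x : ι // x ≠ z}) ≃ {x : ι // x ≠ z},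
            tauIdx (Θ.subtype (· ≠ z)) τ' < Fintype.card {x : ι // x ≠ z} :=
          fun τ' => tauIdx_lt _ hne' τ'
        by_cases hyz : y = z
        · -- y = z cannot be hit after the first step
          rw [Finset.sum_eq_zero, if_neg (fun hy => hz (hyz ▸ hy)), mul_zero]
          intro τ' _
          have htau := tau_fiber_not_mem Θ z hz hc h0 τ' hne'
          rw [term_eq_of_tau υ Θ y _ _ (by have := ht'lt τ'; omega) htau]
          have h3 : (fiberEquiv z hc h0 τ' : Fin (Fintype.card ι) ≃ ι)
              ⟨tauIdx (Θ.subtype (· ≠ z)) τ' + 1, by have := ht'lt τ'; omega⟩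
              = ↑(τ' ⟨tauIdx (Θ.subtype (· ≠ z)) τ', ht'lt τ'⟩) :=
            fiberEquiv_apply_succ z hc h0 τ' ⟨tauIdx (Θ.subtype (· ≠ z)) τ', ht'lt τ'⟩
              (by have := ht'lt τ'; omega)
          rw [h3, if_neg (fun hcontr =>
            (τ' ⟨tauIdx (Θ.subtype (· ≠ z)) τ', ht'lt τ'⟩).2 (hcontr.trans hyz))]
        · -- y ≠ z : reduce to the smaller type
          have hterm : ∀ τ' : Fin (Fintype.card {x : ι // x ≠ z}) ≃ {x : ι // x ≠ z},
              (if h : tauIdx Θ (fiberEquiv z hc h0 τ' : Fin (Fintype.card ι) ≃ ι)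
                  < Fintype.card ι then
                (if (fiberEquiv z hc h0 τ' : Fin (Fintype.card ι) ≃ ι)
                    ⟨tauIdx Θ (fiberEquiv z hc h0 τ' : Fin (Fintype.card ι) ≃ ι), h⟩
                      = y then
                  pathProbUpTo υ Θ (fiberEquiv z hc h0 τ' : Fin (Fintype.card ι) ≃ ι) /
                    ((Fintype.card ι - 1 - tauIdx Θ
                        (fiberEquiv z hc h0 τ' : Fin (Fintype.card ι) ≃ ι)).factorial : ℝ)
                else 0)
              else 0)
              = (υ z / ∑ x : ι, υ x) *
                (if h : tauIdx (Θ.subtype (· ≠ z)) τ' < Fintype.card {x : ι // x ≠ z} then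
                  (if τ' ⟨tauIdx (Θ.subtype (· ≠ z)) τ', h⟩ = (⟨y, hyz⟩ : {x : ι // x ≠ z})
                      then
                    pathProbUpTo (fun x : {x : ι // x ≠ z} => υ ↑x) (Θ.subtype (· ≠ z)) τ' /
                      ((Fintype.card {x : ι // x ≠ z} - 1
                          - tauIdx (Θ.subtype (· ≠ z)) τ').factorial : ℝ)
                  else 0)
                else 0) := by
            intro τ'
            have htau := tau_fiber_not_mem Θ z hz hc h0 τ' hne'
            rw [term_eq_of_tau υ Θ y _ _ (by have := ht'lt τ'; omega) htau]
            have h3 : (fiberEquiv z hc h0 τ' : Fin (Fintype.card ι) ≃ ι)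
                ⟨tauIdx (Θ.subtype (· ≠ z)) τ' + 1, by have := ht'lt τ'; omega⟩
                = ↑(τ' ⟨tauIdx (Θ.subtype (· ≠ z)) τ', ht'lt τ'⟩) :=
              fiberEquiv_apply_succ z hc h0 τ' ⟨tauIdx (Θ.subtype (· ≠ z)) τ', ht'lt τ'⟩
                (by have := ht'lt τ'; omega)
            rw [h3, pathProb_succ υ Θ z hc h0 τ' htau, dif_pos (ht'lt τ'),
              show Fintype.card ι - 1 - (tauIdx (Θ.subtype (· ≠ z)) τ' + 1)
                  = Fintype.card {x : ι // x ≠ z} - 1 - tauIdx (Θ.subtype (· ≠ z)) τ'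
                from by omega]
            by_cases hcond : τ' ⟨tauIdx (Θ.subtype (· ≠ z)) τ', ht'lt τ'⟩
                = (⟨y, hyz⟩ : {x : ι // x ≠ z})
            · rw [if_pos (by rw [hcond]), if_pos hcond, mul_div_assoc]
            · rw [if_neg (fun hcontr => hcond (Subtype.ext hcontr)), if_neg hcond, mul_zero]
          rw [Finset.sum_congr rfl (fun τ' _ => hterm τ'), ← Finset.mul_sum]
          have hIH : firstHitProb (fun x : {x : ι // x ≠ z} => υ ↑x) (Θ.subtype (· ≠ z))
              (⟨y, hyz⟩ : {x : ι // x ≠ z})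
              = if (⟨y, hyz⟩ : {x : ι // x ≠ z}) ∈ Θ.subtype (· ≠ z) then
                  υ y / ∑ w ∈ Θ.subtype (· ≠ z), υ ↑w else 0 :=
            IH {x : ι // x ≠ z} (by omega) _ (fun w => hυ ↑w) _ hne'
              (fun w hw => hΘ ↑w (Finset.mem_subtype.mp hw)) _
          rw [show (∑ τ' : Fin (Fintype.card {x : ι // x ≠ z}) ≃ {x : ι // x ≠ z},
              (if h : tauIdx (Θ.subtype (· ≠ z)) τ' < Fintype.card {x : ι // x ≠ z} then
                (if τ' ⟨tauIdx (Θ.subtype (· ≠ z)) τ', h⟩ = (⟨y, hyz⟩ : {x : ι // x ≠ z})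
                    then
                  pathProbUpTo (fun x : {x : ι // x ≠ z} => υ ↑x) (Θ.subtype (· ≠ z)) τ' /
                    ((Fintype.card {x : ι // x ≠ z} - 1
                        - tauIdx (Θ.subtype (· ≠ z)) τ').factorial : ℝ)
                else 0)
              else 0))
              = firstHitProb (fun x : {x : ι // x ≠ z} => υ ↑x) (Θ.subtype (· ≠ z))
                (⟨y, hyz⟩ : {x : ι // x ≠ z}) from rfl, hIH]
          have hsum' : (∑ w ∈ Θ.subtype (· ≠ z), υ ↑w) = ∑ w ∈ Θ, υ w := by
            rw [Finset.sum_subtype_eq_sum_filter]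
            exact Finset.sum_congr (Finset.filter_true_of_mem
              (fun x hx => fun hxz => hz (hxz ▸ hx))) (fun _ _ => rfl)
          by_cases hy2 : y ∈ Θ
          · rw [if_pos (Finset.mem_subtype.mpr hy2), if_pos hy2, hsum']
          · rw [if_neg (fun hmem => hy2 (Finset.mem_subtype.mp hmem)), if_neg hy2]
    rw [hsplit, Finset.sum_congr rfl (fun z _ => hinner z),
      ← Finset.sum_compl_add_sum Θ]
    have hA : (∑ z ∈ Θᶜ, (if z ∈ Θ then (if z = y then υ z / ∑ x : ι, υ x else 0)
          else (υ z / ∑ x : ι, υ x) * (if y ∈ Θ then υ y / ∑ w ∈ Θ, υ w else 0)))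
        = ((∑ x : ι, υ x) - ∑ w ∈ Θ, υ w) / (∑ x : ι, υ x)
          * (if y ∈ Θ then υ y / ∑ w ∈ Θ, υ w else 0) := by
      rw [Finset.sum_congr rfl (fun z hz => if_neg (Finset.mem_compl.mp hz))]
      rw [← Finset.sum_mul, ← Finset.sum_div]
      have : (∑ z ∈ Θᶜ, υ z) = (∑ x : ι, υ x) - ∑ w ∈ Θ, υ w := by
        have := Finset.sum_compl_add_sum Θ υ
        linarith
      rw [this]
    have hB : (∑ z ∈ Θ, (if z ∈ Θ then (if z = y then υ z / ∑ x : ι, υ x else 0)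
          else (υ z / ∑ x : ι, υ x) * (if y ∈ Θ then υ y / ∑ w ∈ Θ, υ w else 0)))
        = if y ∈ Θ then υ y / ∑ x : ι, υ x else 0 := by
      rw [Finset.sum_congr rfl (fun z hz => if_pos hz), Finset.sum_ite_eq' Θ y]
    rw [hA, hB]
    by_cases hy : y ∈ Θ
    · rw [if_pos hy, if_pos hy]
      field_simp
      ring
    · rw [if_neg hy, if_neg hy, mul_zero, zero_add]

end FHP


/-- Let `𝒦 = {-k,…,k} ∖ {0}`, let `(υ_z)_{z ∈ 𝒦}` be
nonnegative weights, and let `(Z₁,…,Z_{2k})` be the random self-avoiding path on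
`𝒦` sampled without replacement proportionally to `υ`.  For a nonempty
`Θ ⊆ {z : υ_z ≠ 0}`, with `τ = inf{i : Z_i ∈ Θ}` and `Y = Z_τ`, one has
`P(Y = y) = 1_Θ(y) · υ_y / Σ_{y' ∈ Θ} υ_{y'}`. -/
theorem firstHitProb_eq (k : ℕ) (hk : 0 < k)
    (υ : {z : ℤ // z ∈ (Finset.Icc (-(k : ℤ)) k).erase 0} → ℝ)
    (hυ : ∀ z, 0 ≤ υ z)
    (Θ : Finset {z : ℤ // z ∈ (Finset.Icc (-(k : ℤ)) k).erase 0})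
    (hΘne : Θ.Nonempty) (hΘ : ∀ z ∈ Θ, υ z ≠ 0)
    (y : {z : ℤ // z ∈ (Finset.Icc (-(k : ℤ)) k).erase 0}) :
    firstHitProb υ Θ y = if y ∈ Θ then υ y / (∑ z ∈ Θ, υ z) else 0 :=
  FHP.main_aux (Fintype.card _) _ le_rfl υ hυ Θ hΘne hΘ y
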